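/- Let λ ≥ 1, and let Y have density f(y) = e^{-(1/2)|y|^λ}/(2^{1+1/λ}Γ(1+1/λ)). Let d_θ₁(y) = -λ|y|^λ sign(y) and d_μ(y) = (λ/2)|y|^{λ-1} sign(y). Then E[d_θ₁(Y)·d_μ(Y)] = -2^{1-1/λ}·λ / Γ(1+1/λ). -/

import Mathlib

open MeasureTheory Real

/-- The standardized exponential power density (APD with `θ₁ = 1/2`, `θ₂ = l`). -/
noncomputable def epdDensity (l y : ℝ) : ℝ :=
  Real.exp (-(1 / 2) * |y| ^ l) / ((2 : ℝ) ^ (1 + 1 / l) * Real.Gamma (1 + 1 / l))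

/-- The digamma function `ψ(x) = (log ∘ Γ)'(x)`. -/
noncomputable def digamma (x : ℝ) : ℝ :=
  deriv (fun y : ℝ => Real.log (Real.Gamma y)) x

/-- The trigamma function `ψ'`. -/
noncomputable def trigamma (x : ℝ) : ℝ :=
  deriv digamma x

/-- The score component `d_{θ₁}`. -/
noncomputable def dTheta1 (l y : ℝ) : ℝ :=
  -l * |y| ^ l * Real.sign y

/-- The score component `d_μ`. -/
noncomputable def dMu (l y : ℝ) : ℝ :=
  (l / 2) * |y| ^ (l - 1) * Real.sign y

theorem dTheta1_dMu_covariance (l : ℝ) (hl : 1 ≤ l) :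
    ∫ y : ℝ, dTheta1 l y * dMu l y * epdDensity l y
      = -(2 : ℝ) ^ (1 - 1 / l) * l / Real.Gamma (1 + 1 / l) := by
  have hl0 : 0 < l := lt_of_lt_of_le one_pos hl
  set C : ℝ := (2 : ℝ) ^ (1 + 1 / l) * Real.Gamma (1 + 1 / l) with hC
  have key : ∀ y : ℝ, dTheta1 l y * dMu l y * epdDensity l y
      = (fun x : ℝ => (-(l ^ 2 / 2) / C) * (x ^ (2 * l - 1) * Real.exp (-(1 / 2) * x ^ l))) |y| := by
    intro y
    simp only [dTheta1, dMu, epdDensity, ← hC]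
    rcases eq_or_ne y 0 with rfl | hy
    · simp [Real.sign_zero, abs_zero, Real.zero_rpow (by linarith : 2 * l - 1 ≠ 0)]
    · have hs : Real.sign y * Real.sign y = 1 := by
        rcases lt_or_gt_of_ne hy with h | h
        · simp [Real.sign_of_neg h]
        · simp [Real.sign_of_pos h]
      have habs : (0 : ℝ) < |y| := abs_pos.mpr hy
      have hpow : |y| ^ l * |y| ^ (l - 1) = |y| ^ (2 * l - 1) := by
        rw [← Real.rpow_add habs]; ring_nf
      rw [← hpow]
      linear_combination (-(l ^ 2 / 2) * (|y| ^ l * |y| ^ (l - 1)) * Real.exp (-(1 / 2) * |y| ^ l) / C) * hs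
  simp_rw [key]
  rw [integral_comp_abs (f := fun x : ℝ =>
      (-(l ^ 2 / 2) / C) * (x ^ (2 * l - 1) * Real.exp (-(1 / 2) * x ^ l))),
    integral_const_mul,
    integral_rpow_mul_exp_neg_mul_rpow hl0 (by linarith : (-1 : ℝ) < 2 * l - 1) (by norm_num : (0:ℝ) < 1/2)]
  have h2 : (2 * l - 1 + 1) / l = 2 := by field_simp; ring
  have h2' : -(2 * l - 1 + 1) / l = -(2 : ℝ) := by field_simp; ring
  rw [h2, h2']
  have h4 : ((1 : ℝ) / 2) ^ (-(2 : ℝ)) = 4 := by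
    rw [show (-(2:ℝ)) = ((-2 : ℤ) : ℝ) by norm_num, Real.rpow_intCast]
    norm_num
  rw [h4, Real.Gamma_two]
  have hG : 0 < Real.Gamma (1 + 1 / l) := Real.Gamma_pos_of_pos (by positivity)
  have hP : (2 : ℝ) ^ (1 - 1 / l) * (2 : ℝ) ^ (1 + 1 / l) = 4 := by
    rw [← Real.rpow_add two_pos, show (1 - 1/l) + (1 + 1/l) = 2 by ring,
      show (2:ℝ) = ((2:ℕ):ℝ) by norm_num, Real.rpow_natCast]
    norm_num
  have hPpos : (0 : ℝ) < (2 : ℝ) ^ (1 + 1 / l) := Real.rpow_pos_of_pos two_pos _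
  rw [hC]
  have he1 : 1 + 1 / l = (l + 1) / l := by field_simp
  have he2 : 1 - 1 / l = (l - 1) / l := by field_simp
  rw [he1, he2] at hP
  field_simp
  linear_combination hP
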